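/- Suppose X and Y are negative definite integral lattices of rank 2 and ψ : X → Y is an isomorphism of lattices. If X contains a vector of norm -1 then so does Y. Consequently, for m ≥ 1, n ≥ 2, the lattices with Gram matrices [[-2n - m n², 1],[1, -1]] and [[-2n - m n², -1 - m n],[-1 - m n, -1 - m]] are not isomorphic, since the first contains a norm -1 vector and (by positivity of m(nx+y)² + (2n-1)x² + (x+y)² minus appropriate terms) the second does not. -/
import Mathlib


open Matrix

lemma conj_dot (A P : Matrix (Fin 2) (Fin 2) ℤ) (v : Fin 2 → ℤ) :
    v ⬝ᵥ (Pᵀ * A * P).mulVec v = (P.mulVec v) ⬝ᵥ A.mulVec (P.mulVec v) := by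
  rw [← Matrix.mulVec_mulVec, ← Matrix.mulVec_mulVec, Matrix.dotProduct_mulVec,
    Matrix.vecMul_transpose]

lemma transfer (A B : Matrix (Fin 2) (Fin 2) ℤ)
    (P : Matrix (Fin 2) (Fin 2) ℤ) (hdet : IsUnit P.det)
    (hPB : Pᵀ * A * P = B) (v : Fin 2 → ℤ) (hv : v ⬝ᵥ A.mulVec v = -1) :
    ∃ w : Fin 2 → ℤ, w ⬝ᵥ B.mulVec w = -1 := by
  refine ⟨P⁻¹.mulVec v, ?_⟩
  have hPv : P.mulVec (P⁻¹.mulVec v) = v := by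
    rw [Matrix.mulVec_mulVec, Matrix.mul_nonsing_inv _ hdet, Matrix.one_mulVec]
  rw [← hPB, conj_dot, hPv, hv]

theorem stmt_15 :
    (∀ (A B : Matrix (Fin 2) (Fin 2) ℤ), A.IsSymm → B.IsSymm →
      (∀ v : Fin 2 → ℤ, v ≠ 0 → v ⬝ᵥ A.mulVec v < 0) →
      (∀ v : Fin 2 → ℤ, v ≠ 0 → v ⬝ᵥ B.mulVec v < 0) →
      (∃ P : Matrix (Fin 2) (Fin 2) ℤ, IsUnit P.det ∧ Pᵀ * A * P = B) →
      (∃ v : Fin 2 → ℤ, v ⬝ᵥ A.mulVec v = -1) →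
      ∃ w : Fin 2 → ℤ, w ⬝ᵥ B.mulVec w = -1) ∧
    (∀ m n : ℤ, 1 ≤ m → 2 ≤ n →
      ¬ ∃ P : Matrix (Fin 2) (Fin 2) ℤ, IsUnit P.det ∧
        Pᵀ * !![-2*n - m*n^2, 1; 1, -1] * P =
          !![-2*n - m*n^2, -1 - m*n; -1 - m*n, -1 - m]) := by
  constructor
  · rintro A B _ _ _ _ ⟨P, hdet, hPB⟩ ⟨v, hv⟩
    exact transfer A B P hdet hPB v hv
  · rintro m n hm hn ⟨P, hdet, hPB⟩
    have hv : (![0, 1] : Fin 2 → ℤ) ⬝ᵥ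
        (!![-2*n - m*n^2, 1; 1, -1] : Matrix (Fin 2) (Fin 2) ℤ).mulVec ![0, 1] = -1 := by
      simp [Matrix.mulVec, dotProduct, Fin.sum_univ_two]
    obtain ⟨w, hw⟩ := transfer _ _ P hdet hPB _ hv
    set x := w 0 with hx
    set y := w 1 with hy
    have hexp : (-2*n - m*n^2) * x * x + (-1 - m*n) * (x*y) + (-1 - m*n) * (y*x)
        + (-1 - m) * y * y = -1 := by
      have := hw
      simp [Matrix.mulVec, dotProduct, Fin.sum_univ_two, ← hx, ← hy] at this
      ring_nf at this ⊢
      linarith [this]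
    have key : m * (n*x + y)^2 + (2*n - 1) * x^2 + (x + y)^2 = 1 := by ring_nf; ring_nf at hexp; linarith
    have h1 : 0 ≤ m * (n*x + y)^2 := mul_nonneg (by linarith) (sq_nonneg _)
    rcases eq_or_ne x 0 with hx0 | hx0
    · rw [hx0] at key
      rcases eq_or_ne y 0 with hy0 | hy0
      · rw [hy0] at key; simp at key
      · have : 1 ≤ y^2 := by rcases hy0.lt_or_gt with h | h <;> nlinarith
        nlinarith
    · have : 1 ≤ x^2 := by rcases hx0.lt_or_gt with h | h <;> nlinarith
      nlinarith [sq_nonneg (x + y)]
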